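/- Let K ≥ 2 be an even integer and let α ∈ (1,2]. Then the infimum of 2·D_α(p‖q)/‖p−q‖₁² over all pairs p ≠ q in relint(Δ^K) equals K^{1−α}. In particular, D_α(p‖q) ≥ (K^{1−α}/2)·‖p−q‖₁² for all p, q ∈ relint(Δ^K), and K^{1−α} is the largest constant C ≥ 0 such that D_α(p‖q) ≥ (C/2)·‖p−q‖₁² holds for all p, q ∈ relint(Δ^K). -/

import Mathlib

open Finset Real

/-- The α-Tsallis entropy on the positive orthant (Shannon for α = 1, Burg for α = 0). -/
noncomputable def tsallis (α : ℝ) {K : ℕ} (p : Fin K → ℝ) : ℝ :=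
  if α = 0 then ∑ k, Real.log (p k)
  else if α = 1 then -∑ k, p k * Real.log (p k)
  else (∑ k, p k ^ α) / (α * (1 - α))

/-- The gradient of the α-Tsallis entropy on the positive orthant. -/
noncomputable def tsallisGrad (α : ℝ) {K : ℕ} (q : Fin K → ℝ) (k : Fin K) : ℝ :=
  if α = 0 then 1 / q k
  else if α = 1 then -(1 + Real.log (q k))
  else -(q k ^ (α - 1)) / (α - 1)

/-- The Bregman divergence D_α of the negative α-Tsallis entropy:
`D_α(p‖q) = -S_α(p) + S_α(q) + ⟨∇S_α(q), p - q⟩`. -/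
noncomputable def breg (α : ℝ) {K : ℕ} (p q : Fin K → ℝ) : ℝ :=
  -tsallis α p + tsallis α q + ∑ k, tsallisGrad α q k * (p k - q k)

/-- The relative interior of the probability simplex Δ^K. -/
def relintSimplex (K : ℕ) : Set (Fin K → ℝ) :=
  {p | (∀ k, 0 < p k ∧ p k < 1) ∧ ∑ k, p k = 1}

/-- The ℓ¹ norm on ℝ^K. -/
noncomputable def l1 {K : ℕ} (x : Fin K → ℝ) : ℝ := ∑ k, |x k|

open Set in
lemma taylor2_le (g g₁ g₂ : ℝ → ℝ) (c : ℝ)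
    (hg : ∀ s ∈ Icc (0:ℝ) 1, HasDerivAt g (g₁ s) s)
    (hg₁ : ∀ s ∈ Icc (0:ℝ) 1, HasDerivAt g₁ (g₂ s) s)
    (hc : ∀ s ∈ Icc (0:ℝ) 1, c ≤ g₂ s) :
    g 0 + g₁ 0 + c / 2 ≤ g 1 := by
  set h₁ : ℝ → ℝ := fun s => g₁ s - g₁ 0 - c * s with hh₁def
  have Hh₁ : ∀ s ∈ Icc (0:ℝ) 1, HasDerivAt h₁ (g₂ s - c) s := by
    intro s hs
    have : HasDerivAt (fun t => g₁ t - g₁ 0 - c * t) (g₂ s - c * 1) s :=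
      ((hg₁ s hs).sub_const _).sub ((hasDerivAt_id s).const_mul c)
    simpa using this
  have mono₁ : MonotoneOn h₁ (Icc 0 1) := by
    apply monotoneOn_of_deriv_nonneg (convex_Icc 0 1)
    · exact fun s hs => (Hh₁ s hs).continuousAt.continuousWithinAt
    · rw [interior_Icc]
      exact fun s hs => (Hh₁ s (Ioo_subset_Icc_self hs)).differentiableAt.differentiableWithinAt
    · rw [interior_Icc]
      intro s hs
      rw [(Hh₁ s (Ioo_subset_Icc_self hs)).deriv]
      have := hc s (Ioo_subset_Icc_self hs); linarith
  have h₁nonneg : ∀ s ∈ Icc (0:ℝ) 1, 0 ≤ h₁ s := by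
    intro s hs
    have := mono₁ (left_mem_Icc.2 zero_le_one) hs hs.1
    simpa [hh₁def] using this
  set h : ℝ → ℝ := fun s => g s - g 0 - g₁ 0 * s - c / 2 * s ^ 2 with hhdef
  have Hh : ∀ s ∈ Icc (0:ℝ) 1, HasDerivAt h (h₁ s) s := by
    intro s hs
    have : HasDerivAt (fun t => g t - g 0 - g₁ 0 * t - c / 2 * t ^ 2)
        (g₁ s - g₁ 0 * 1 - c / 2 * (2 * s)) s := by
      refine (((hg s hs).sub_const _).sub ((hasDerivAt_id s).const_mul (g₁ 0))).sub ?_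
      have : HasDerivAt (fun t : ℝ => t ^ 2) (2 * s) s := by
        simpa using (hasDerivAt_pow 2 s)
      exact this.const_mul _
    simpa [hh₁def] using this.congr_deriv (by ring)
  have mono : MonotoneOn h (Icc 0 1) := by
    apply monotoneOn_of_deriv_nonneg (convex_Icc 0 1)
    · exact fun s hs => (Hh s hs).continuousAt.continuousWithinAt
    · rw [interior_Icc]
      exact fun s hs => (Hh s (Ioo_subset_Icc_self hs)).differentiableAt.differentiableWithinAt
    · rw [interior_Icc]
      intro s hs
      rw [(Hh s (Ioo_subset_Icc_self hs)).deriv]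
      exact h₁nonneg s (Ioo_subset_Icc_self hs)
  have := mono (left_mem_Icc.2 zero_le_one) (right_mem_Icc.2 zero_le_one) zero_le_one
  simp only [hhdef] at this
  nlinarith [this]

open Set in
lemma taylor2_ge (g g₁ g₂ : ℝ → ℝ) (c : ℝ)
    (hg : ∀ s ∈ Icc (0:ℝ) 1, HasDerivAt g (g₁ s) s)
    (hg₁ : ∀ s ∈ Icc (0:ℝ) 1, HasDerivAt g₁ (g₂ s) s)
    (hc : ∀ s ∈ Icc (0:ℝ) 1, g₂ s ≤ c) :
    g 1 ≤ g 0 + g₁ 0 + c / 2 := by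
  have := taylor2_le (fun s => -g s) (fun s => -g₁ s) (fun s => -g₂ s) (-c)
    (fun s hs => (hg s hs).neg) (fun s hs => (hg₁ s hs).neg)
    (fun s hs => neg_le_neg (hc s hs))
  linarith

lemma pm_bound (K : ℕ) (hK : 1 ≤ K) (α : ℝ) (hα1 : 1 < α) (hα2 : α ≤ 2)
    (r : Fin K → ℝ) (hr : ∀ k, 0 < r k) (hr1 : ∑ k, r k = 1) :
    ∑ k, r k ^ (2 - α) ≤ (K : ℝ) ^ (α - 1) := by
  have hK0 : (0:ℝ) < K := by positivity
  rcases eq_or_lt_of_le hα2 with h2 | h2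
  · subst h2
    simp only [sub_self, Real.rpow_zero]
    simp [Finset.sum_const, Finset.card_univ]
    rw [show (2:ℝ) - 1 = 1 by ring, Real.rpow_one]
  · set β : ℝ := 2 - α with hβ
    have hβ0 : 0 < β := by simp only [hβ]; linarith
    have hp1 : 1 ≤ β⁻¹ := by
      rw [le_inv_comm₀ one_pos hβ0]; linarith
    have key := Real.arith_mean_le_rpow_mean (s := Finset.univ)
      (fun _ : Fin K => (K:ℝ)⁻¹) (fun k => r k ^ β)
      (fun _ _ => by positivity)
      (by simp [Finset.sum_const, Finset.card_univ]; field_simp)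
      (fun k _ => Real.rpow_nonneg (hr k).le _) hp1
    simp only [one_div, inv_inv] at key
    have hz : ∀ k : Fin K, (r k ^ β) ^ β⁻¹ = r k := by
      intro k
      rw [← Real.rpow_mul (hr k).le, mul_inv_cancel₀ hβ0.ne', Real.rpow_one]
    simp only [hz] at key
    rw [← Finset.mul_sum, ← Finset.mul_sum, hr1, mul_one] at key
    have h2' := mul_le_mul_of_nonneg_left key hK0.le
    rw [← mul_assoc, mul_inv_cancel₀ hK0.ne', one_mul] at h2'
    calc ∑ k, r k ^ β ≤ (K:ℝ) * ((K:ℝ)⁻¹) ^ β := h2'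
      _ = (K : ℝ) ^ (α - 1) := by
          rw [Real.inv_rpow hK0.le, ← Real.rpow_neg hK0.le]
          nth_rewrite 1 [← Real.rpow_one (K:ℝ)]
          rw [← Real.rpow_add hK0]
          congr 1
          simp only [hβ]; ring

lemma key_weight (K : ℕ) (hK : 1 ≤ K) (α : ℝ) (hα1 : 1 < α) (hα2 : α ≤ 2)
    (r d : Fin K → ℝ) (hr : ∀ k, 0 < r k) (hr1 : ∑ k, r k = 1) :
    (K:ℝ) ^ (1 - α) * (∑ k, |d k|) ^ 2 ≤ ∑ k, d k ^ 2 * r k ^ (α - 2) := by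
  have hK0 : (0:ℝ) < K := by positivity
  have hCS := Finset.sum_mul_sq_le_sq_mul_sq Finset.univ
    (fun k => |d k| * r k ^ ((α - 2)/2)) (fun k => r k ^ ((2 - α)/2))
  have hprod : ∀ k : Fin K, |d k| * r k ^ ((α - 2)/2) * r k ^ ((2 - α)/2) = |d k| := by
    intro k
    rw [mul_assoc, ← Real.rpow_add (hr k),
      show (α - 2)/2 + (2 - α)/2 = 0 by ring, Real.rpow_zero, mul_one]
  have hsq1 : ∀ k : Fin K, (|d k| * r k ^ ((α - 2)/2)) ^ 2 = d k ^ 2 * r k ^ (α - 2) := by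
    intro k
    have h : (r k ^ ((α - 2)/2)) ^ 2 = r k ^ (α - 2) := by
      rw [sq, ← Real.rpow_add (hr k), show (α - 2)/2 + (α - 2)/2 = α - 2 by ring]
    rw [mul_pow, sq_abs, h]
  have hsq2 : ∀ k : Fin K, (r k ^ ((2 - α)/2)) ^ 2 = r k ^ (2 - α) := by
    intro k
    rw [sq, ← Real.rpow_add (hr k), show (2 - α)/2 + (2 - α)/2 = 2 - α by ring]
  simp only [hprod, hsq1, hsq2] at hCS
  have hpm := pm_bound K hK α hα1 hα2 r hr hr1
  have hnn : (0:ℝ) ≤ ∑ k, d k ^ 2 * r k ^ (α - 2) := by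
    apply Finset.sum_nonneg
    intro k _
    exact mul_nonneg (sq_nonneg _) (Real.rpow_nonneg (hr k).le _)
  have h3 : (∑ k, |d k|) ^ 2 ≤ (∑ k, d k ^ 2 * r k ^ (α - 2)) * (K:ℝ) ^ (α - 1) :=
    hCS.trans (mul_le_mul_of_nonneg_left hpm hnn)
  have h4 := mul_le_mul_of_nonneg_left h3 (Real.rpow_nonneg hK0.le (1 - α))
  calc (K:ℝ) ^ (1 - α) * (∑ k, |d k|) ^ 2
      ≤ (K:ℝ) ^ (1 - α) * ((∑ k, d k ^ 2 * r k ^ (α - 2)) * (K:ℝ) ^ (α - 1)) := h4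
    _ = ((K:ℝ) ^ (1 - α) * (K:ℝ) ^ (α - 1)) * (∑ k, d k ^ 2 * r k ^ (α - 2)) := by ring
    _ = ∑ k, d k ^ 2 * r k ^ (α - 2) := by
        rw [← Real.rpow_add hK0, show (1:ℝ) - α + (α - 1) = 0 by ring, Real.rpow_zero, one_mul]

open Set in
lemma breg_low {K : ℕ} (α : ℝ) (hα1 : 1 < α)
    (p q : Fin K → ℝ) (hp0 : ∀ k, 0 < p k) (hq0 : ∀ k, 0 < q k) (c : ℝ)
    (hc : ∀ s ∈ Icc (0:ℝ) 1,
      c ≤ ∑ k, (p k - q k) ^ 2 * (q k + s * (p k - q k)) ^ (α - 2)) :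
    c / 2 ≤ breg α p q := by
  have hα0 : α ≠ 0 := by linarith
  have hαne1 : α ≠ 1 := by linarith
  have hαpos : (0:ℝ) < α * (α - 1) := by nlinarith
  set d : Fin K → ℝ := fun k => p k - q k with hd
  have hXpos : ∀ s ∈ Icc (0:ℝ) 1, ∀ k, 0 < q k + s * d k := by
    intro s hs k
    have h : q k + s * d k = (1 - s) * q k + s * p k := by simp only [hd]; ring
    rw [h]
    rcases eq_or_lt_of_le hs.1 with h0 | h0
    · rw [← h0]; simpa using hq0 k
    · have : 0 ≤ (1 - s) * q k := mul_nonneg (by linarith [hs.2]) (hq0 k).le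
      nlinarith [hp0 k]
  set g : ℝ → ℝ := fun s => ∑ k, (q k + s * d k) ^ α with hg
  set g₁ : ℝ → ℝ := fun s => ∑ k, α * (q k + s * d k) ^ (α - 1) * d k with hg₁
  set g₂ : ℝ → ℝ := fun s => ∑ k, α * ((α - 1) * (q k + s * d k) ^ (α - 2) * d k) * d k
    with hg₂
  have hinner : ∀ (k : Fin K) (s : ℝ), HasDerivAt (fun t => q k + t * d k) (d k) s := by
    intro k s
    simpa using ((hasDerivAt_id s).mul_const (d k)).const_add (q k)
  have Hg : ∀ s ∈ Icc (0:ℝ) 1, HasDerivAt g (g₁ s) s := by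
    intro s hs
    apply HasDerivAt.fun_sum
    intro k _
    have houter := Real.hasDerivAt_rpow_const (x := q k + s * d k) (p := α) (Or.inr hα1.le)
    have := houter.comp s (hinner k s)
    simpa [mul_comm, mul_assoc, mul_left_comm, Function.comp_def] using this
  have Hg₁ : ∀ s ∈ Icc (0:ℝ) 1, HasDerivAt g₁ (g₂ s) s := by
    intro s hs
    apply HasDerivAt.fun_sum
    intro k _
    have houter := Real.hasDerivAt_rpow_const (x := q k + s * d k) (p := α - 1)
      (Or.inl (hXpos s hs k).ne')
    have h2 := ((houter.comp s (hinner k s)).const_mul α).mul_const (d k)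
    rw [show α - 1 - 1 = α - 2 from by ring] at h2
    simpa [mul_comm, mul_assoc, mul_left_comm] using h2
  have hg₂eq : ∀ s : ℝ, g₂ s = α * (α - 1) * ∑ k, d k ^ 2 * (q k + s * d k) ^ (α - 2) := by
    intro s
    simp only [hg₂, Finset.mul_sum]
    apply Finset.sum_congr rfl
    intro k _
    ring
  have hlow := taylor2_le g g₁ g₂ (α * (α - 1) * c) Hg Hg₁ (by
    intro s hs
    rw [hg₂eq s]
    exact mul_le_mul_of_nonneg_left (hc s hs) hαpos.le)
  have hg0 : g 0 = ∑ k, q k ^ α := by simp [hg]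
  have hg1 : g 1 = ∑ k, p k ^ α := by simp [hg, hd]
  have hbreg : breg α p q = (g 1 - g 0 - g₁ 0) / (α * (α - 1)) := by
    have hsum : ∑ k, tsallisGrad α q k * (p k - q k)
        = -(g₁ 0) / (α * (α - 1)) := by
      rw [hg₁]
      simp only [zero_mul, add_zero, neg_div, ← Finset.sum_div, ← Finset.sum_neg_distrib]
      rw [Finset.sum_div]
      apply Finset.sum_congr rfl
      intro k _
      rw [tsallisGrad, if_neg hα0, if_neg hαne1]
      rw [div_mul_eq_mul_div, div_eq_div_iff (by intro h; apply hαne1; linarith [sub_eq_zero.mp h] : α - 1 ≠ 0) hαpos.ne']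
      simp only [hd]
      ring
    rw [breg, tsallis, tsallis, if_neg hα0, if_neg hαne1, if_neg hα0, if_neg hαne1,
      hsum, hg0, hg1]
    rw [show α * (1 - α) = -(α * (α - 1)) from by ring, div_neg, div_neg]
    ring
  rw [hbreg, le_div_iff₀ hαpos]
  nlinarith [hlow]


open Set in
lemma breg_high {K : ℕ} (α : ℝ) (hα1 : 1 < α)
    (p q : Fin K → ℝ) (hp0 : ∀ k, 0 < p k) (hq0 : ∀ k, 0 < q k) (c' : ℝ)
    (hc' : ∀ s ∈ Icc (0:ℝ) 1,
      (∑ k, (p k - q k) ^ 2 * (q k + s * (p k - q k)) ^ (α - 2)) ≤ c') :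
    breg α p q ≤ c' / 2 := by
  have hα0 : α ≠ 0 := by linarith
  have hαne1 : α ≠ 1 := by linarith
  have hαpos : (0:ℝ) < α * (α - 1) := by nlinarith
  set d : Fin K → ℝ := fun k => p k - q k with hd
  have hXpos : ∀ s ∈ Icc (0:ℝ) 1, ∀ k, 0 < q k + s * d k := by
    intro s hs k
    have h : q k + s * d k = (1 - s) * q k + s * p k := by simp only [hd]; ring
    rw [h]
    rcases eq_or_lt_of_le hs.1 with h0 | h0
    · rw [← h0]; simpa using hq0 k
    · have : 0 ≤ (1 - s) * q k := mul_nonneg (by linarith [hs.2]) (hq0 k).le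
      nlinarith [hp0 k]
  set g : ℝ → ℝ := fun s => ∑ k, (q k + s * d k) ^ α with hg
  set g₁ : ℝ → ℝ := fun s => ∑ k, α * (q k + s * d k) ^ (α - 1) * d k with hg₁
  set g₂ : ℝ → ℝ := fun s => ∑ k, α * ((α - 1) * (q k + s * d k) ^ (α - 2) * d k) * d k
    with hg₂
  have hinner : ∀ (k : Fin K) (s : ℝ), HasDerivAt (fun t => q k + t * d k) (d k) s := by
    intro k s
    simpa using ((hasDerivAt_id s).mul_const (d k)).const_add (q k)
  have Hg : ∀ s ∈ Icc (0:ℝ) 1, HasDerivAt g (g₁ s) s := by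
    intro s hs
    apply HasDerivAt.fun_sum
    intro k _
    have houter := Real.hasDerivAt_rpow_const (x := q k + s * d k) (p := α) (Or.inr hα1.le)
    have := houter.comp s (hinner k s)
    simpa [mul_comm, mul_assoc, mul_left_comm, Function.comp_def] using this
  have Hg₁ : ∀ s ∈ Icc (0:ℝ) 1, HasDerivAt g₁ (g₂ s) s := by
    intro s hs
    apply HasDerivAt.fun_sum
    intro k _
    have houter := Real.hasDerivAt_rpow_const (x := q k + s * d k) (p := α - 1)
      (Or.inl (hXpos s hs k).ne')
    have h2 := ((houter.comp s (hinner k s)).const_mul α).mul_const (d k)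
    rw [show α - 1 - 1 = α - 2 from by ring] at h2
    simpa [mul_comm, mul_assoc, mul_left_comm] using h2
  have hg₂eq : ∀ s : ℝ, g₂ s = α * (α - 1) * ∑ k, d k ^ 2 * (q k + s * d k) ^ (α - 2) := by
    intro s
    simp only [hg₂, Finset.mul_sum]
    apply Finset.sum_congr rfl
    intro k _
    ring
  have hhigh := taylor2_ge g g₁ g₂ (α * (α - 1) * c') Hg Hg₁ (by
    intro s hs
    rw [hg₂eq s]
    exact mul_le_mul_of_nonneg_left (hc' s hs) hαpos.le)
  have hg0 : g 0 = ∑ k, q k ^ α := by simp [hg]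
  have hg1 : g 1 = ∑ k, p k ^ α := by simp [hg, hd]
  have hbreg : breg α p q = (g 1 - g 0 - g₁ 0) / (α * (α - 1)) := by
    have hsum : ∑ k, tsallisGrad α q k * (p k - q k)
        = -(g₁ 0) / (α * (α - 1)) := by
      rw [hg₁]
      simp only [zero_mul, add_zero, neg_div, ← Finset.sum_div, ← Finset.sum_neg_distrib]
      rw [Finset.sum_div]
      apply Finset.sum_congr rfl
      intro k _
      rw [tsallisGrad, if_neg hα0, if_neg hαne1]
      rw [div_mul_eq_mul_div, div_eq_div_iff (by intro h; apply hαne1; linarith [sub_eq_zero.mp h] : α - 1 ≠ 0) hαpos.ne']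
      simp only [hd]
      ring
    rw [breg, tsallis, tsallis, if_neg hα0, if_neg hαne1, if_neg hα0, if_neg hαne1,
      hsum, hg0, hg1]
    rw [show α * (1 - α) = -(α * (α - 1)) from by ring, div_neg, div_neg]
    ring
  rw [hbreg, div_le_div_iff₀ hαpos (by norm_num : (0:ℝ) < 2)]
  nlinarith [hhigh]


open Set in
lemma segment_sum_one {K : ℕ} (p q : Fin K → ℝ) (hp1 : ∑ k, p k = 1) (hq1 : ∑ k, q k = 1)
    (s : ℝ) : ∑ k, (q k + s * (p k - q k)) = 1 := by
  rw [Finset.sum_add_distrib, ← Finset.mul_sum, Finset.sum_sub_distrib, hp1, hq1]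
  ring

open Set in
lemma segment_pos {K : ℕ} (p q : Fin K → ℝ) (hp0 : ∀ k, 0 < p k) (hq0 : ∀ k, 0 < q k)
    {s : ℝ} (hs : s ∈ Icc (0:ℝ) 1) (k : Fin K) : 0 < q k + s * (p k - q k) := by
  have h : q k + s * (p k - q k) = (1 - s) * q k + s * p k := by ring
  rw [h]
  rcases eq_or_lt_of_le hs.1 with h0 | h0
  · rw [← h0]; simpa using hq0 k
  · have : 0 ≤ (1 - s) * q k := mul_nonneg (by linarith [hs.2]) (hq0 k).le
    nlinarith [hp0 k]

lemma breg_ge (K : ℕ) (hK : 2 ≤ K) (α : ℝ) (hα1 : 1 < α) (hα2 : α ≤ 2)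
    (p q : Fin K → ℝ) (hp : p ∈ relintSimplex K) (hq : q ∈ relintSimplex K) :
    breg α p q ≥ (K:ℝ) ^ (1 - α) / 2 * (l1 (p - q)) ^ 2 := by
  have hp0 : ∀ k, 0 < p k := fun k => (hp.1 k).1
  have hq0 : ∀ k, 0 < q k := fun k => (hq.1 k).1
  have hL : l1 (p - q) = ∑ k, |p k - q k| := by simp [l1]
  have hW : ∀ s ∈ Set.Icc (0:ℝ) 1,
      (K:ℝ) ^ (1 - α) * (l1 (p - q)) ^ 2
        ≤ ∑ k, (p k - q k) ^ 2 * (q k + s * (p k - q k)) ^ (α - 2) := by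
    intro s hs
    rw [hL]
    exact key_weight K (by omega) α hα1 hα2 (fun k => q k + s * (p k - q k))
      (fun k => p k - q k) (fun k => segment_pos p q hp0 hq0 hs k)
      (segment_sum_one p q hp.2 hq.2 s)
  have h := breg_low α hα1 p q hp0 hq0 ((K:ℝ) ^ (1 - α) * (l1 (p - q)) ^ 2) hW
  rw [ge_iff_le]
  calc (K:ℝ) ^ (1 - α) / 2 * (l1 (p - q)) ^ 2
      = (K:ℝ) ^ (1 - α) * (l1 (p - q)) ^ 2 / 2 := by ring
    _ ≤ breg α p q := h

lemma sigma_sum_zero (K : ℕ) (hK : 2 ≤ K) (hKeven : Even K) :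
    ∑ k : Fin K, (if (k : ℕ) < K / 2 then (1:ℝ) else -1) = 0 := by
  obtain ⟨m, hm⟩ := hKeven
  have hK2 : K / 2 = m := by omega
  rw [Fin.sum_univ_eq_sum_range (fun i => if i < K / 2 then (1:ℝ) else -1), hK2, hm]
  rw [Finset.range_eq_Ico, ← Finset.sum_Ico_consecutive _ (Nat.zero_le m) (by omega : m ≤ m + m)]
  have h1 : ∑ i ∈ Finset.Ico 0 m, (if i < m then (1:ℝ) else -1) = m := by
    rw [Finset.sum_congr rfl (fun i hi => if_pos (Finset.mem_Ico.1 hi).2)]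
    simp [Nat.card_Ico]
  have h2 : ∑ i ∈ Finset.Ico m (m + m), (if i < m then (1:ℝ) else -1) = -(m:ℝ) := by
    rw [Finset.sum_congr rfl (fun i hi => if_neg (by
      have := (Finset.mem_Ico.1 hi).1; omega))]
    simp [Nat.card_Ico]
  rw [h1, h2]
  ring

lemma family_bound (K : ℕ) (hK : 2 ≤ K) (hKeven : Even K)
    (α : ℝ) (hα1 : 1 < α) (hα2 : α ≤ 2) {δ : ℝ} (hδ : 0 < δ) :
    ∃ p ∈ relintSimplex K, ∃ q ∈ relintSimplex K, p ≠ q ∧ 0 < l1 (p - q) ∧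
      breg α p q ≤ ((K:ℝ) ^ (1 - α) + δ) / 2 * (l1 (p - q)) ^ 2 := by
  have hK0 : (0:ℝ) < K := by positivity
  have hKR : (2:ℝ) ≤ K := by exact_mod_cast hK
  set u : ℝ := (K:ℝ)⁻¹ with hu_def
  have hu : 0 < u := by positivity
  have hu2 : u ≤ 1/2 := by
    rw [hu_def]
    rw [show (1:ℝ)/2 = 2⁻¹ by norm_num]
    exact inv_anti₀ two_pos hKR
  -- choose ε by continuity
  have h1 : Filter.Tendsto (fun t : ℝ => u - t) (nhds 0) (nhds (u - 0)) :=
    Filter.Tendsto.sub tendsto_const_nhds Filter.tendsto_id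
  rw [sub_zero] at h1
  have hto : Filter.Tendsto (fun t : ℝ => (u - t) ^ (α - 2)) (nhds 0) (nhds (u ^ (α - 2))) :=
    ((Real.continuousAt_rpow_const u (α - 2) (Or.inl hu.ne')).tendsto).comp h1
  have hev : ∀ᶠ t in nhds (0:ℝ), (u - t) ^ (α - 2) < u ^ (α - 2) + (K:ℝ) * δ :=
    hto.eventually_lt_const (by nlinarith)
  rw [Metric.eventually_nhds_iff] at hev
  obtain ⟨η, hη, hball⟩ := hev
  set ε : ℝ := min (η / 2) (u / 2) with hε_def
  have hε0 : 0 < ε := lt_min (by linarith) (by linarith)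
  have hεu : ε < u := (min_le_right _ _).trans_lt (by linarith)
  have hbound : (u - ε) ^ (α - 2) < u ^ (α - 2) + (K:ℝ) * δ := by
    apply hball
    rw [Real.dist_eq, sub_zero, abs_of_pos hε0]
    exact (min_le_left _ _).trans_lt (by linarith)
  set σ : Fin K → ℝ := fun k => if (k : ℕ) < K / 2 then (1:ℝ) else -1 with hσ_def
  have hσap : ∀ k, σ k = 1 ∨ σ k = -1 := by
    intro k
    by_cases h : (k : ℕ) < K / 2 <;> simp [hσ_def, h]
  have hσabs : ∀ k, |σ k| = 1 := by
    intro k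
    rcases hσap k with h | h <;> rw [h] <;> norm_num
  have hσsum : ∑ k, σ k = 0 := sigma_sum_zero K hK hKeven
  set p : Fin K → ℝ := fun k => u + ε * σ k with hp_def
  set q : Fin K → ℝ := fun k => u with hq_def
  have hrange : ∀ k, p k = u + ε ∨ p k = u - ε := by
    intro k
    rcases hσap k with h | h
    · left; rw [hp_def]; simp [h]
    · right; rw [hp_def]; simp [h]; ring
  have hp0 : ∀ k, 0 < p k := by
    intro k; rcases hrange k with h | h <;> rw [h] <;> linarith
  have hp1 : ∀ k, p k < 1 := by
    intro k; rcases hrange k with h | h <;> rw [h] <;> linarith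
  have hpsum : ∑ k, p k = 1 := by
    rw [hp_def]
    rw [Finset.sum_add_distrib, ← Finset.mul_sum, hσsum, Finset.sum_const,
      Finset.card_univ, Fintype.card_fin, nsmul_eq_mul]
    rw [hu_def]
    field_simp
    ring
  have hpmem : p ∈ relintSimplex K := ⟨fun k => ⟨hp0 k, hp1 k⟩, hpsum⟩
  have hqsum : ∑ k, q k = 1 := by
    rw [hq_def]
    rw [Finset.sum_const, Finset.card_univ, Fintype.card_fin, nsmul_eq_mul, hu_def]
    field_simp
  have hqmem : q ∈ relintSimplex K := ⟨fun _ => ⟨hu, by linarith⟩, hqsum⟩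
  have hq0 : ∀ k, 0 < q k := fun k => hu
  have hzero_lt : (0 : ℕ) < K / 2 := by omega
  have hne : p ≠ q := by
    intro h
    have h0 := congrFun h ⟨0, by omega⟩
    rw [hp_def, hq_def] at h0
    simp only [hσ_def] at h0
    rw [if_pos (by simpa using hzero_lt)] at h0
    simp at h0
    linarith
  have hd : ∀ k, p k - q k = ε * σ k := by
    intro k; rw [hp_def, hq_def]; ring
  have hLval : l1 (p - q) = K * ε := by
    rw [l1]
    have : ∀ k : Fin K, |(p - q) k| = ε := by
      intro k
      rw [Pi.sub_apply, hd k, abs_mul, hσabs k, abs_of_pos hε0, mul_one]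
    rw [Finset.sum_congr rfl (fun k _ => this k)]
    rw [Finset.sum_const, Finset.card_univ, Fintype.card_fin, nsmul_eq_mul]
  have hLpos : 0 < l1 (p - q) := by rw [hLval]; positivity
  refine ⟨p, hpmem, q, hqmem, hne, hLpos, ?_⟩
  -- upper bound on breg
  have hc' : ∀ s ∈ Set.Icc (0:ℝ) 1,
      (∑ k, (p k - q k) ^ 2 * (q k + s * (p k - q k)) ^ (α - 2))
        ≤ (K:ℝ) * (ε ^ 2 * (u - ε) ^ (α - 2)) := by
    intro s hs
    have hterm : ∀ k : Fin K,
        (p k - q k) ^ 2 * (q k + s * (p k - q k)) ^ (α - 2)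
          ≤ ε ^ 2 * (u - ε) ^ (α - 2) := by
      intro k
      have hd2 : (p k - q k) ^ 2 = ε ^ 2 := by
        rw [hd k, mul_pow]
        rcases hσap k with h | h <;> rw [h] <;> norm_num
      rw [hd2]
      apply mul_le_mul_of_nonneg_left _ (sq_nonneg ε)
      apply Real.rpow_le_rpow_of_nonpos (by linarith) _ (by linarith)
      rw [hq_def, hd k]
      rcases hσap k with h | h <;> rw [h] <;> nlinarith [hs.1, hs.2, hε0]
    calc (∑ k, (p k - q k) ^ 2 * (q k + s * (p k - q k)) ^ (α - 2))
        ≤ ∑ _k : Fin K, ε ^ 2 * (u - ε) ^ (α - 2) :=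
          Finset.sum_le_sum (fun k _ => hterm k)
      _ = (K:ℝ) * (ε ^ 2 * (u - ε) ^ (α - 2)) := by
          rw [Finset.sum_const, Finset.card_univ, Fintype.card_fin, nsmul_eq_mul]
  have hbh := breg_high α hα1 p q hp0 hq0 _ hc'
  have hrpow : u ^ (α - 2) = (K:ℝ) ^ (2 - α) := by
    rw [hu_def, ← Real.rpow_neg_one (K:ℝ), ← Real.rpow_mul hK0.le]
    congr 1
    ring
  have hmul : (K:ℝ) ^ (2 - α) = (K:ℝ) ^ (1 - α) * (K:ℝ) ^ (1:ℝ) := by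
    rw [← Real.rpow_add hK0]; congr 1; ring
  rw [Real.rpow_one] at hmul
  have hKsplit : (K:ℝ) ^ (2 - α) + (K:ℝ) * δ = ((K:ℝ) ^ (1 - α) + δ) * K := by
    rw [add_mul, ← hmul]; ring
  have hmain : (K:ℝ) * (ε ^ 2 * (u - ε) ^ (α - 2)) ≤ ((K:ℝ) ^ (1 - α) + δ) * (K * ε) ^ 2 := by
    have h5 : (u - ε) ^ (α - 2) ≤ ((K:ℝ) ^ (1 - α) + δ) * K := by
      rw [← hKsplit, ← hrpow]
      exact hbound.le
    calc (K:ℝ) * (ε ^ 2 * (u - ε) ^ (α - 2))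
        ≤ (K:ℝ) * (ε ^ 2 * (((K:ℝ) ^ (1 - α) + δ) * K)) := by
          apply mul_le_mul_of_nonneg_left _ hK0.le
          exact mul_le_mul_of_nonneg_left h5 (sq_nonneg ε)
      _ = ((K:ℝ) ^ (1 - α) + δ) * (K * ε) ^ 2 := by ring
  rw [hLval]
  calc breg α p q ≤ (K:ℝ) * (ε ^ 2 * (u - ε) ^ (α - 2)) / 2 := hbh
    _ ≤ ((K:ℝ) ^ (1 - α) + δ) * (K * ε) ^ 2 / 2 := by linarith
    _ = ((K:ℝ) ^ (1 - α) + δ) / 2 * ((K:ℝ) * ε) ^ 2 := by ring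
theorem pinsker_tsallis_even_K (K : ℕ) (hK : 2 ≤ K) (hKeven : Even K)
    (α : ℝ) (hα1 : 1 < α) (hα2 : α ≤ 2) :
    sInf {r : ℝ | ∃ p ∈ relintSimplex K, ∃ q ∈ relintSimplex K,
        p ≠ q ∧ r = 2 * breg α p q / (l1 (p - q)) ^ 2} = (K : ℝ) ^ (1 - α) ∧
    (∀ p ∈ relintSimplex K, ∀ q ∈ relintSimplex K,
        breg α p q ≥ (K : ℝ) ^ (1 - α) / 2 * (l1 (p - q)) ^ 2) ∧
    IsGreatest {C : ℝ | 0 ≤ C ∧ ∀ p ∈ relintSimplex K, ∀ q ∈ relintSimplex K,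
        breg α p q ≥ C / 2 * (l1 (p - q)) ^ 2} ((K : ℝ) ^ (1 - α)) := by
  have hK0 : (0:ℝ) < K := by positivity
  have part2 : ∀ p ∈ relintSimplex K, ∀ q ∈ relintSimplex K,
      breg α p q ≥ (K:ℝ) ^ (1 - α) / 2 * (l1 (p - q)) ^ 2 :=
    fun p hp q hq => breg_ge K hK α hα1 hα2 p q hp hq
  have hl1pos : ∀ p q : Fin K → ℝ, p ≠ q → 0 < l1 (p - q) := by
    intro p q hne
    have hex : ∃ k, p k ≠ q k := by
      by_contra h; push_neg at h; exact hne (funext h)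
    obtain ⟨k, hk⟩ := hex
    have h1 : 0 < |(p - q) k| := abs_pos.2 (sub_ne_zero.2 hk)
    have h2 : |(p - q) k| ≤ l1 (p - q) := by
      rw [l1]
      exact Finset.single_le_sum (f := fun i => |(p - q) i|)
        (fun i _ => abs_nonneg _) (Finset.mem_univ k)
    linarith
  set S := {r : ℝ | ∃ p ∈ relintSimplex K, ∃ q ∈ relintSimplex K,
      p ≠ q ∧ r = 2 * breg α p q / (l1 (p - q)) ^ 2} with hS
  have hlb : ∀ r ∈ S, (K:ℝ) ^ (1 - α) ≤ r := by
    rintro r ⟨p, hp, q, hq, hne, rfl⟩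
    have hL := hl1pos p q hne
    have hb := part2 p hp q hq
    rw [le_div_iff₀ (by positivity)]
    nlinarith
  have hub : ∀ δ : ℝ, 0 < δ → ∃ r ∈ S, r ≤ (K:ℝ) ^ (1 - α) + δ := by
    intro δ hδ
    obtain ⟨p, hp, q, hq, hne, hL, hb⟩ := family_bound K hK hKeven α hα1 hα2 hδ
    refine ⟨2 * breg α p q / (l1 (p - q)) ^ 2, ⟨p, hp, q, hq, hne, rfl⟩, ?_⟩
    rw [div_le_iff₀ (by positivity)]
    nlinarith
  have hSne : S.Nonempty := by
    obtain ⟨r, hr, _⟩ := hub 1 one_pos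
    exact ⟨r, hr⟩
  have hbdd : BddBelow S := ⟨(K:ℝ) ^ (1 - α), hlb⟩
  refine ⟨le_antisymm ?_ (le_csInf hSne hlb), part2,
    ⟨⟨Real.rpow_nonneg hK0.le _, part2⟩, ?_⟩⟩
  · apply le_of_forall_pos_le_add
    intro δ hδ
    obtain ⟨r, hrS, hrle⟩ := hub δ hδ
    exact (csInf_le hbdd hrS).trans hrle
  · intro C hC
    apply le_of_forall_pos_le_add
    intro δ hδ
    obtain ⟨p, hp, q, hq, hne, hL, hb⟩ := family_bound K hK hKeven α hα1 hα2 hδ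
    have h1 := hC.2 p hp q hq
    nlinarith [mul_pos hL hL, sq_nonneg (l1 (p - q))]
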